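/- arXiv:2004.08451 — 2 statements merged into one kernel-verified Lean document; each statement's English description precedes it below -/
import Mathlib

section
/- The partial derivative of log det(Q) with respect to the edge weight w_e equals the effective resistance r_e of edge e, where Q = L + (1/n)J and L = Σ_e w_e g_e g_eᵀ. -/
open Matrix BigOperators

/-- Edge vector g_e for edge e = (i,j): +1 at i, -1 at j. -/
noncomputable def edgeVec (n : ℕ) (i j : Fin n) : Fin n → ℝ :=
  fun k => (if k = i then (1:ℝ) else 0) - (if k = j then (1:ℝ) else 0)

/-- Combinatorial graph Laplacian L = Σ_{e∈E} w_e g_e g_eᵀ. -/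
noncomputable def glap (n : ℕ) (E : Finset (Fin n × Fin n)) (w : Fin n × Fin n → ℝ) :
    Matrix (Fin n) (Fin n) ℝ :=
  ∑ e ∈ E, w e • Matrix.vecMulVec (edgeVec n e.1 e.2) (edgeVec n e.1 e.2)

/-- The all-ones n×n matrix J. -/
noncomputable def ones (n : ℕ) : Matrix (Fin n) (Fin n) ℝ := Matrix.of fun _ _ => (1:ℝ)

/-- Strengthened Laplacian Q = L + (1/n) J. -/
noncomputable def sLap (n : ℕ) (E : Finset (Fin n × Fin n)) (w : Fin n × Fin n → ℝ) :
    Matrix (Fin n) (Fin n) ℝ := glap n E w + (n : ℝ)⁻¹ • ones n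

/-- The simple graph on Fin n with (undirected) edges given by the pairs in E. -/
def graphOf (n : ℕ) (E : Finset (Fin n × Fin n)) : SimpleGraph (Fin n) :=
  SimpleGraph.fromEdgeSet ↑(E.image fun e => s(e.1, e.2))

/-- T is a spanning tree: its graph is connected and it has n-1 edges. -/
def IsSpanningTree (n : ℕ) (T : Finset (Fin n × Fin n)) : Prop :=
  (graphOf n T).Connected ∧ T.card = n - 1

open scoped Classical in
/-- Ω(L(w)) : the total weight of spanning trees, Σ_{spanning T ⊆ E} Π_{e∈T} w_e. -/
noncomputable def treeWeightSum (n : ℕ) (E : Finset (Fin n × Fin n))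
    (w : Fin n × Fin n → ℝ) : ℝ :=
  ∑ T ∈ E.powerset.filter (IsSpanningTree n), ∏ e ∈ T, w e

/-- B is the Moore–Penrose pseudoinverse of A. -/
def IsMoorePenrose {n : ℕ} (A B : Matrix (Fin n) (Fin n) ℝ) : Prop :=
  A * B * A = A ∧ B * A * B = B ∧ (A * B)ᵀ = A * B ∧ (B * A)ᵀ = B * A


lemma sLap_update {n : ℕ} (E : Finset (Fin n × Fin n))
    (w : Fin n × Fin n → ℝ) (e : Fin n × Fin n) (he : e ∈ E) (s : ℝ) :
    sLap n E (Function.update w e s)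
      = sLap n E w + (s - w e) • Matrix.vecMulVec (edgeVec n e.1 e.2) (edgeVec n e.1 e.2) := by
  unfold sLap glap
  have h : ∀ e' ∈ E, (Function.update w e s e') • Matrix.vecMulVec (edgeVec n e'.1 e'.2) (edgeVec n e'.1 e'.2)
      = (w e') • Matrix.vecMulVec (edgeVec n e'.1 e'.2) (edgeVec n e'.1 e'.2)
        + (if e' = e then (s - w e) • Matrix.vecMulVec (edgeVec n e.1 e.2) (edgeVec n e.1 e.2) else 0) := by
    intro e' _
    by_cases h : e' = e
    · subst h; simp [Function.update_self, sub_smul]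
    · simp [Function.update_of_ne h, h]
  rw [Finset.sum_congr rfl h, Finset.sum_add_distrib, Finset.sum_ite_eq' E e
      (fun _ => (s - w e) • Matrix.vecMulVec (edgeVec n e.1 e.2) (edgeVec n e.1 e.2)), if_pos he]
  abel

/-- ∂/∂w_e [log det Q(w)] = r_e = g_eᵀ Q(w)⁻¹ g_e. -/
theorem stmt5 {n : ℕ} (E : Finset (Fin n × Fin n))
    (w : Fin n × Fin n → ℝ) (e : Fin n × Fin n) (he : e ∈ E)
    (hQ : (sLap n E w).PosDef) :
    HasDerivAt
      (fun s : ℝ => Real.log ((sLap n E (Function.update w e s)).det))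
      (edgeVec n e.1 e.2 ⬝ᵥ ((sLap n E w)⁻¹ *ᵥ edgeVec n e.1 e.2))
      (w e) := by
  set g := edgeVec n e.1 e.2
  set Q := sLap n E w with hQdef
  have hdet : Q.det ≠ 0 := ne_of_gt hQ.det_pos
  have hU : IsUnit Q.det := isUnit_iff_ne_zero.mpr hdet
  set r : ℝ := g ⬝ᵥ (Q⁻¹ *ᵥ g) with hr
  have key : ∀ s : ℝ, (sLap n E (Function.update w e s)).det
      = Q.det * (1 + (s - w e) * r) := by
    intro s
    rw [sLap_update E w e he s]
    have hvmv : (s - w e) • Matrix.vecMulVec g g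
        = Matrix.replicateCol Unit ((s - w e) • g) * Matrix.replicateRow Unit g := by
      rw [← Matrix.vecMulVec_eq]
      ext i j; simp [Matrix.vecMulVec]; ring
    rw [hvmv, Matrix.det_add_replicateCol_mul_replicateRow hU]
    congr 1
    rw [Matrix.det_unique]
    simp [Matrix.mul_apply, Matrix.mulVec, dotProduct, Finset.mul_sum, Finset.sum_mul, hr]
    ring_nf
    rw [Finset.sum_comm]
  have h1 : HasDerivAt (fun s : ℝ => Q.det * (1 + (s - w e) * r)) (Q.det * r) (w e) := by
    have : HasDerivAt (fun s : ℝ => 1 + (s - w e) * r) r (w e) := by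
      have := ((hasDerivAt_id (w e)).sub_const (w e)).mul_const r
      simpa using this.const_add 1
    simpa [mul_comm] using this.const_mul Q.det
  have h2 : HasDerivAt (fun s : ℝ => Real.log (Q.det * (1 + (s - w e) * r))) r (w e) := by
    have hx : Q.det * (1 + (w e - w e) * r) ≠ 0 := by simpa using hdet
    have := (Real.hasDerivAt_log hx).comp (w e) h1
    simp only [Function.comp_def] at this
    rw [sub_self, zero_mul, add_zero, mul_one, inv_mul_cancel_left₀ hdet] at this
    exact this
  have : (fun s : ℝ => Real.log ((sLap n E (Function.update w e s)).det))
      = fun s : ℝ => Real.log (Q.det * (1 + (s - w e) * r)) := by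
    funext s; rw [key s]
  rw [this]
  exact h2
end

section
/- At any optimal solution of minimize -log det(L + (1/n)J) subject to L ∈ 𝕃ₙ (Laplacians with support in E) and Σ_{e∈E} h_e w_e ≤ n-1, every edge e with positive optimal weight satisfies r*_e = h_e, and every edge e ∈ E with zero optimal weight satisfies r*_e ≤ h_e, where r*_e is the effective resistance in the optimal graph. -/
open Matrix BigOperators

lemma pow_one_add_bound (m : ℕ) : ∀ x : ℝ, |x| ≤ 1 → |(1+x)^m - 1 - m*x| ≤ 3^m * x^2 := by
  induction m with
  | zero => intro x hx; simpa using sq_nonneg x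
  | succ m ih =>
    intro x hx
    have hA := ih x hx
    have hkey : (1+x)^(m+1) - 1 - ((m+1:ℕ):ℝ)*x
        = (m:ℝ)*x^2 + ((1+x)^m - 1 - m*x)*(1+x) := by
      push_cast; ring
    have h1x : |1 + x| ≤ 2 := by
      have := abs_add_le 1 x
      simp at this ⊢
      linarith [abs_nonneg x, this]
    have hm3 : (m:ℝ) ≤ 3^m := by
      calc (m:ℝ) ≤ 2^m := by exact_mod_cast (Nat.lt_two_pow_self (n := m)).le
      _ ≤ 3^m := by gcongr; norm_num
    calc |(1+x)^(m+1) - 1 - ((m+1:ℕ):ℝ)*x|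
        ≤ (m:ℝ)*x^2 + |(1+x)^m - 1 - m*x| * |1+x| := by
          rw [hkey]
          refine (abs_add_le _ _).trans ?_
          rw [abs_mul, abs_mul, abs_of_nonneg (by positivity : (0:ℝ) ≤ (m:ℝ)),
            abs_of_nonneg (sq_nonneg x)]
      _ ≤ (3:ℝ)^m * x^2 + (3^m * x^2) * 2 := by gcongr
      _ = 3^(m+1) * x^2 := by rw [pow_succ]; ring

lemma edgeVec_sum (n : ℕ) (i j : Fin n) : ∑ k, edgeVec n i j k = 0 := by
  simp [edgeVec, Finset.sum_sub_distrib]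

lemma glap_mul_ones (n : ℕ) (E : Finset (Fin n × Fin n)) (w : Fin n × Fin n → ℝ) :
    glap n E w * ones n = 0 := by
  rw [glap, Finset.sum_mul]
  refine Finset.sum_eq_zero fun e _ => ?_
  ext i j
  simp [Matrix.mul_apply, vecMulVec_apply, ones, ← Finset.sum_mul,
    mul_comm, ← Finset.mul_sum, edgeVec_sum]

lemma ones_mul_ones (n : ℕ) : ones n * ones n = (n:ℝ) • ones n := by
  ext i j; simp [Matrix.mul_apply, ones]

-- determinant of c•1 + (1-c)•(n⁻¹ ones)
lemma det_scaler (n : ℕ) (hn : 0 < n) (c : ℝ) (hc : c ≠ 0) :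
    ((c • (1 : Matrix (Fin n) (Fin n) ℝ)) + ((1-c) * (n:ℝ)⁻¹) • ones n).det = c^(n-1) := by
  have hones : ones n = Matrix.replicateCol Unit (fun _ => (1:ℝ)) * Matrix.replicateRow Unit (fun _ => (1:ℝ)) := by
    ext i j; simp [ones, Matrix.mul_apply, Matrix.replicateCol, Matrix.replicateRow]
  have key : (c • (1 : Matrix (Fin n) (Fin n) ℝ)) + ((1-c) * (n:ℝ)⁻¹) • ones n
      = c • ((1 : Matrix (Fin n) (Fin n) ℝ) +
          Matrix.replicateCol Unit (fun _ => ((1-c) * (n:ℝ)⁻¹)/c) * Matrix.replicateRow Unit (fun _ => (1:ℝ))) := by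
    rw [smul_add, hones]
    congr 1
    ext i j
    simp [Matrix.mul_apply, Matrix.replicateCol, Matrix.replicateRow]
    field_simp
  rw [key, Matrix.det_smul, Matrix.det_one_add_replicateCol_mul_replicateRow]
  have hn' : (n:ℝ) ≠ 0 := Nat.cast_ne_zero.2 hn.ne'
  have hd : (1 + ((fun _ => (1:ℝ)) : Fin n → ℝ) ⬝ᵥ ((fun _ => ((1-c) * (n:ℝ)⁻¹)/c) : Fin n → ℝ)) = 1/c := by
    simp [dotProduct]
    field_simp
    ring
  rw [hd, Fintype.card_fin]
  rw [show n = (n-1)+1 from (Nat.succ_pred_eq_of_pos hn).symm, pow_succ]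
  field_simp
  simp

lemma sLap_scale (n : ℕ) (hn : 0 < n) (E : Finset (Fin n × Fin n)) (w : Fin n × Fin n → ℝ)
    (c : ℝ) (hc : c ≠ 0) :
    (c • glap n E w + (n:ℝ)⁻¹ • ones n).det = c^(n-1) * (sLap n E w).det := by
  have hn' : (n:ℝ) ≠ 0 := Nat.cast_ne_zero.2 hn.ne'
  have e1 : glap n E w * (c • (1:Matrix (Fin n) (Fin n) ℝ)) = c • glap n E w := by
    rw [Matrix.mul_smul, mul_one]
  have e2 : glap n E w * (((1-c) * (n:ℝ)⁻¹) • ones n) = 0 := by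
    rw [Matrix.mul_smul, glap_mul_ones, smul_zero]
  have e3 : ((n:ℝ)⁻¹ • ones n) * (c • (1:Matrix (Fin n) (Fin n) ℝ))
      = c • ((n:ℝ)⁻¹ • ones n) := by
    rw [Matrix.mul_smul, mul_one]
  have e4 : ((n:ℝ)⁻¹ • ones n) * (((1-c) * (n:ℝ)⁻¹) • ones n)
      = ((1-c) * (n:ℝ)⁻¹) • ones n := by
    rw [Matrix.mul_smul, Matrix.smul_mul, ones_mul_ones, smul_smul, smul_smul]
    congr 1
    field_simp
  have factor : c • glap n E w + (n:ℝ)⁻¹ • ones n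
      = (sLap n E w) * (c • (1:Matrix (Fin n) (Fin n) ℝ) + ((1-c) * (n:ℝ)⁻¹) • ones n) := by
    rw [sLap, add_mul, mul_add, mul_add, e1, e2, e3, e4]
    module
  rw [factor, Matrix.det_mul, det_scaler n hn c hc, mul_comm]

lemma det_rank_one (n : ℕ) (Q : Matrix (Fin n) (Fin n) ℝ) (hQ : IsUnit Q.det)
    (t : ℝ) (g : Fin n → ℝ) :
    (Q + t • vecMulVec g g).det = Q.det * (1 + t * (g ⬝ᵥ Q⁻¹ *ᵥ g)) := by
  have hcr : t • vecMulVec g g = Matrix.replicateCol Unit (t • g) * Matrix.replicateRow Unit g := by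
    ext i j
    simp [vecMulVec_apply, Matrix.mul_apply, Matrix.replicateCol, Matrix.replicateRow]
    ring
  rw [hcr, Matrix.det_add_replicateCol_mul_replicateRow hQ]
  congr 1
  rw [Matrix.det_unique]
  simp only [Matrix.add_apply, Matrix.one_apply_eq, Matrix.mul_apply, Matrix.replicateRow, Matrix.replicateCol,
    Matrix.of_apply, dotProduct, mulVec, Pi.smul_apply, smul_eq_mul]
  congr 1
  simp only [Finset.sum_mul, Finset.mul_sum]
  rw [Finset.sum_comm]
  exact Finset.sum_congr rfl fun j _ => Finset.sum_congr rfl fun k _ => by ring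

lemma glap_pert (n : ℕ) (E : Finset (Fin n × Fin n)) (w : Fin n × Fin n → ℝ)
    (e : Fin n × Fin n) (he : e ∈ E) (t : ℝ) :
    glap n E (fun a => w a + if a = e then t else 0)
      = glap n E w + t • vecMulVec (edgeVec n e.1 e.2) (edgeVec n e.1 e.2) := by
  rw [glap, glap]
  simp only [add_smul, ite_smul, zero_smul, Finset.sum_add_distrib]
  congr 1
  rw [Finset.sum_ite_eq' E e
    (fun a => t • vecMulVec (edgeVec n a.1 a.2) (edgeVec n a.1 a.2)), if_pos he]

lemma glap_scale (n : ℕ) (E : Finset (Fin n × Fin n)) (w : Fin n × Fin n → ℝ) (c : ℝ) :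
    glap n E (fun a => c * w a) = c • glap n E w := by
  rw [glap, glap, Finset.smul_sum]
  exact Finset.sum_congr rfl fun a _ => (mul_smul c (w a) _)

lemma det_master (n : ℕ) (hn : 0 < n) (E : Finset (Fin n × Fin n)) (w : Fin n × Fin n → ℝ)
    (e : Fin n × Fin n) (he : e ∈ E) (c t : ℝ) (hc : c ≠ 0)
    (hQ : IsUnit (sLap n E w).det) :
    (sLap n E (fun a => c * (w a + if a = e then t else 0))).det
      = c^(n-1) * ((sLap n E w).det
          * (1 + t * (edgeVec n e.1 e.2 ⬝ᵥ (sLap n E w)⁻¹ *ᵥ edgeVec n e.1 e.2))) := by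
  have h1 : sLap n E (fun a => c * (w a + if a = e then t else 0))
      = c • glap n E (fun a => w a + if a = e then t else 0) + (n:ℝ)⁻¹ • ones n := by
    rw [sLap, glap_scale]
  rw [h1, sLap_scale n hn E _ c hc]
  congr 1
  have h2 : sLap n E (fun a => w a + if a = e then t else 0)
      = sLap n E w + t • vecMulVec (edgeVec n e.1 e.2) (edgeVec n e.1 e.2) := by
    rw [sLap, sLap, glap_pert n E w e he t, add_right_comm]
  rw [h2, det_rank_one n _ hQ]

lemma le_of_forall_eps (a b : ℝ) (h : ∀ ε > 0, a ≤ b + ε) : a ≤ b := by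
  by_contra hlt
  push_neg at hlt
  have := h ((a-b)/2) (by linarith)
  linarith

set_option maxHeartbeats 1000000 in
/-- KKT conditions at the optimum: r*_e = h_e if w*_e > 0,
and r*_e ≤ h_e if w*_e = 0, for e ∈ E. -/
theorem stmt10 {n : ℕ} (hn : 0 < n) (E : Finset (Fin n × Fin n))
    (h : Fin n × Fin n → ℝ) (hh : ∀ e ∈ E, 0 < h e)
    (hloop : ∀ e ∈ E, e.1 ≠ e.2)
    (wstar : Fin n × Fin n → ℝ)
    (hfeas : (∀ e ∈ E, 0 ≤ wstar e) ∧ ∑ e ∈ E, h e * wstar e ≤ (n : ℝ) - 1)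
    (hopt : ∀ w : Fin n × Fin n → ℝ, (∀ e ∈ E, 0 ≤ w e) →
      ∑ e ∈ E, h e * w e ≤ (n : ℝ) - 1 →
      -Real.log ((sLap n E wstar).det) ≤ -Real.log ((sLap n E w).det))
    (hconn : (sLap n E wstar).PosDef) :
    ∀ e ∈ E,
      (0 < wstar e →
        edgeVec n e.1 e.2 ⬝ᵥ ((sLap n E wstar)⁻¹ *ᵥ edgeVec n e.1 e.2) = h e) ∧
      (wstar e = 0 →
        edgeVec n e.1 e.2 ⬝ᵥ ((sLap n E wstar)⁻¹ *ᵥ edgeVec n e.1 e.2) ≤ h e) := by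
  intro e he
  by_cases hlt2 : n < 2
  · have hn1 : n = 1 := by omega
    subst hn1
    exact absurd (Subsingleton.elim e.1 e.2) (hloop e he)
  push_neg at hlt2
  obtain ⟨hw0, hbud⟩ := hfeas
  set g : Fin n → ℝ := edgeVec n e.1 e.2 with hg
  set Q := sLap n E wstar with hQdef
  set r : ℝ := g ⬝ᵥ Q⁻¹ *ᵥ g with hr
  have hdet : 0 < Q.det := hconn.det_pos
  have hQu : IsUnit Q.det := hdet.ne'.isUnit
  set m : ℕ := n - 1 with hm
  have hm1 : 1 ≤ m := by omega
  have hmcast : ((m:ℕ):ℝ) = (n:ℝ) - 1 := by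
    rw [hm]
    have : (1:ℕ) ≤ n := hn
    push_cast [Nat.cast_sub this]
    ring
  have hnm1 : (0:ℝ) < (n:ℝ) - 1 := by
    rw [← hmcast]; exact_mod_cast hm1
  have hhe : 0 < h e := hh e he
  set B := ∑ a ∈ E, h a * wstar a with hB
  have hB0 : 0 ≤ B := Finset.sum_nonneg fun a ha => mul_nonneg (hh a ha).le (hw0 a ha)
  have hbudw : ∀ (c t : ℝ), ∑ a ∈ E, h a * (c * (wstar a + if a = e then t else 0))
      = c * (B + t * h e) := by
    intro c t
    have hterm : ∀ a ∈ E, h a * (c * (wstar a + if a = e then t else 0))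
        = c * (h a * wstar a) + (if a = e then c * t * h a else 0) := by
      intro a _
      by_cases hae : a = e <;> simp [hae] <;> ring
    rw [Finset.sum_congr rfl hterm, Finset.sum_add_distrib, ← Finset.mul_sum,
      Finset.sum_ite_eq' E e (fun a => c * t * h a), if_pos he, ← hB]
    ring
  -- budget tightness
  have hBeq : B = (n:ℝ) - 1 := by
    rcases eq_or_lt_of_le hbud with heq | hltb
    · exact heq
    exfalso
    rcases eq_or_lt_of_le hB0 with hB0' | hBpos
    · -- all weights zero, Q can't be posdef
      have hall : ∀ a ∈ E, h a * wstar a = 0 := by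
        have := (Finset.sum_eq_zero_iff_of_nonneg
          (fun a ha => mul_nonneg (hh a ha).le (hw0 a ha))).1 hB0'.symm
        exact this
      have hwz : ∀ a ∈ E, wstar a = 0 := fun a ha => by
        rcases mul_eq_zero.1 (hall a ha) with h' | h'
        · exact absurd h' (hh a ha).ne'
        · exact h'
      have hgl : glap n E wstar = 0 :=
        Finset.sum_eq_zero fun a ha => by rw [hwz a ha, zero_smul]
      have hge : g ≠ 0 := by
        intro h0
        have := congrFun h0 e.1
        simp [hg, edgeVec, (hloop e he)] at this
      have hmv : Q *ᵥ g = 0 := by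
        rw [hQdef, sLap, hgl, zero_add]
        ext i
        simp [ones, mulVec, dotProduct, hg, edgeVec, Finset.sum_sub_distrib, mul_sub]
      have hpos := hconn.dotProduct_mulVec_pos hge
      rw [hmv] at hpos
      simp at hpos
    · -- scale up
      set c := ((n:ℝ)-1)/B with hc
      have hc1 : 1 < c := (one_lt_div hBpos).2 hltb
      have hc0 : 0 < c := lt_trans one_pos hc1
      have hdet' := det_master n hn E wstar e he c 0 hc0.ne' hQu
      rw [← hQdef, ← hg, ← hr] at hdet'
      have hbud' : ∑ a ∈ E, h a * (c * (wstar a + if a = e then (0:ℝ) else 0)) ≤ (n:ℝ) - 1 := by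
        rw [hbudw c 0, zero_mul, add_zero, hc, div_mul_cancel₀ _ hBpos.ne']
      have hopt' := hopt _ (fun a ha => by
        have h0 : (0:ℝ) ≤ wstar a + if a = e then (0:ℝ) else 0 := by
          by_cases hae : a = e
          · simpa [hae] using hw0 a ha
          · simpa [hae] using hw0 a ha
        exact mul_nonneg hc0.le h0) hbud'
      have hDpos : 0 < (sLap n E (fun a => c * (wstar a + if a = e then (0:ℝ) else 0))).det := by
        rw [hdet']
        have : (0:ℝ) < c ^ (n-1) := pow_pos hc0 _
        nlinarith [hdet]
      have hle : (sLap n E (fun a => c * (wstar a + if a = e then (0:ℝ) else 0))).det ≤ Q.det :=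
        (Real.log_le_log_iff hDpos hdet).1 (by linarith [hopt'])
      rw [hdet'] at hle
      have hcm : 1 < c ^ m := one_lt_pow₀ hc1 (by omega)
      rw [show n - 1 = m from rfl] at hle
      nlinarith [hdet]
  -- key inequality
  have key : ∀ t : ℝ, 0 ≤ wstar e + t → 0 < ((n:ℝ)-1) + t * h e →
      1 + t * r ≤ ((((n:ℝ)-1) + t * h e)/((n:ℝ)-1))^m := by
    intro t ht hden
    set c := ((n:ℝ)-1) / (((n:ℝ)-1) + t * h e) with hc
    have hc0 : 0 < c := div_pos hnm1 hden
    have hw' : ∀ a ∈ E, 0 ≤ c * (wstar a + if a = e then t else 0) := by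
      intro a ha
      refine mul_nonneg hc0.le ?_
      by_cases hae : a = e
      · simp [hae]; exact ht
      · simp [hae]; exact hw0 a ha
    have hbud' : ∑ a ∈ E, h a * (c * (wstar a + if a = e then t else 0)) ≤ (n:ℝ) - 1 := by
      rw [hbudw c t, hBeq, hc, div_mul_cancel₀ _ hden.ne']
    have hdet' := det_master n hn E wstar e he c t hc0.ne' hQu
    rw [← hQdef, ← hg, ← hr] at hdet'
    rcases le_or_gt (1 + t*r) 0 with hneg | hposr
    · refine hneg.trans (le_of_lt ?_)
      positivity
    · have hDpos : 0 < (sLap n E (fun a => c * (wstar a + if a = e then t else 0))).det := by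
        rw [hdet']
        exact mul_pos (pow_pos hc0 _) (mul_pos hdet hposr)
      have hopt' := hopt _ hw' hbud'
      have hle : (sLap n E (fun a => c * (wstar a + if a = e then t else 0))).det ≤ Q.det :=
        (Real.log_le_log_iff hDpos hdet).1 (by linarith [hopt'])
      rw [hdet', show n - 1 = m from rfl] at hle
      have hcm : 0 < c ^ m := pow_pos hc0 m
      have h1 : c ^ m * (1 + t*r) ≤ 1 := by nlinarith [hdet]
      have hfin : 1 + t * r ≤ 1 / c ^ m := by
        rw [le_div_iff₀ hcm, mul_comm]
        exact h1
      refine hfin.trans_eq ?_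
      rw [hc, one_div, ← inv_pow, inv_div]
  -- polynomial approximation step
  set K := (3:ℝ)^m * (h e)^2 / ((n:ℝ)-1)^2 with hKdef
  have hK : 0 < K := by rw [hKdef]; positivity
  have approx : ∀ t : ℝ, |t * h e / ((n:ℝ)-1)| ≤ 1 →
      ((((n:ℝ)-1) + t * h e)/((n:ℝ)-1))^m ≤ 1 + t * h e + K * t^2 := by
    intro t hx
    set x := t * h e / ((n:ℝ)-1) with hxdef
    have hb := abs_le.1 (pow_one_add_bound m x hx)
    have h1x : (((n:ℝ)-1) + t * h e)/((n:ℝ)-1) = 1 + x := by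
      rw [hxdef]; field_simp
    rw [h1x]
    have hmx : (m:ℝ)*x = t * h e := by
      rw [hxdef, hmcast]; field_simp
    have hx2 : (3:ℝ)^m * x^2 = K * t^2 := by
      rw [hxdef, hKdef]; field_simp
    nlinarith [hb.2]
  -- upper bound r ≤ h e
  have hub : r ≤ h e := by
    apply le_of_forall_eps
    intro ε hε
    set t := min (((n:ℝ)-1)/(h e)) (ε / K) with ht
    have ht0 : 0 < t := lt_min (by positivity) (by positivity)
    have hth : t * h e ≤ (n:ℝ)-1 := by
      have h' : t ≤ ((n:ℝ)-1)/(h e) := min_le_left _ _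
      calc t * h e ≤ (((n:ℝ)-1)/(h e)) * h e := by gcongr
        _ = (n:ℝ)-1 := by field_simp
    have hkey := key t (by linarith [hw0 e he]) (by have := mul_pos ht0 hhe; linarith)
    have hxabs : |t * h e / ((n:ℝ)-1)| ≤ 1 := by
      rw [abs_of_nonneg (by positivity), div_le_one hnm1]
      exact hth
    have hchain := hkey.trans (approx t hxabs)
    have hrle : r ≤ h e + K * t := le_of_mul_le_mul_left (by nlinarith) ht0
    have htK : K * t ≤ ε := by
      have h' : t ≤ ε / K := min_le_right _ _
      calc K * t ≤ K * (ε / K) := by gcongr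
        _ = ε := by field_simp
    linarith
  -- lower bound when wstar e > 0
  have hlb : 0 < wstar e → h e ≤ r := by
    intro hwe
    apply le_of_forall_eps
    intro ε hε
    set u := min (wstar e) (min (((n:ℝ)-1)/(2 * h e)) (ε / K)) with hu
    have hu0 : 0 < u := lt_min hwe (lt_min (by positivity) (by positivity))
    have huw : u ≤ wstar e := min_le_left _ _
    have huh : u * h e ≤ ((n:ℝ)-1)/2 := by
      have h' : u ≤ ((n:ℝ)-1)/(2 * h e) := (min_le_right _ _).trans (min_le_left _ _)
      calc u * h e ≤ (((n:ℝ)-1)/(2 * h e)) * h e := by gcongr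
        _ = ((n:ℝ)-1)/2 := by field_simp
    have hden : 0 < ((n:ℝ)-1) + (-u) * h e := by nlinarith
    have hkey := key (-u) (by linarith) hden
    have hxabs : |(-u) * h e / ((n:ℝ)-1)| ≤ 1 := by
      rw [abs_div, abs_of_pos hnm1, div_le_one hnm1, abs_mul, abs_neg,
        abs_of_pos hu0, abs_of_pos hhe]
      linarith
    have hchain := hkey.trans (approx _ hxabs)
    have hrge : h e ≤ r + K * u := le_of_mul_le_mul_left (by nlinarith) hu0
    have huK : K * u ≤ ε := by
      have h' : u ≤ ε / K := (min_le_right _ _).trans (min_le_right _ _)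
      calc K * u ≤ K * (ε / K) := by gcongr
        _ = ε := by field_simp
    linarith
  exact ⟨fun hwe => le_antisymm hub (hlb hwe), fun _ => hub⟩
end
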